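/- Let (A,·,∘) be a transposed Novikov-Poisson algebra and u ∈ A a fixed element. Define x⋆y := u·(x∘y) − (u·x)∘y − x∘(u·y). Then (A,·,⋆) is again a transposed Novikov-Poisson algebra, and moreover x⋆y = −u·(x∘y). -/
import Mathlib


/-- The left Kantor product x⋆y := u·(x∘y) − (u·x)∘y − x∘(u·y) of a
transposed Novikov-Poisson algebra satisfies x⋆y = −u·(x∘y) and makes (A,·,⋆)
again a transposed Novikov-Poisson algebra. -/
theorem stmt12 {k A : Type*} [Field k] [AddCommGroup A] [Module k A]
    (hchar : (2:k) ≠ 0)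
    (mul cir : A →ₗ[k] A →ₗ[k] A)
    (hcomm : ∀ x y : A, mul x y = mul y x)
    (hassoc : ∀ x y z : A, mul (mul x y) z = mul x (mul y z))
    (hnov1 : ∀ x y z : A, cir (cir x y) z = cir (cir x z) y)
    (hnov2 : ∀ x y z : A, cir (cir x y) z - cir x (cir y z) = cir (cir y x) z - cir y (cir x z))
    (htnp1 : ∀ x y z : A, cir (mul x y) z = cir (mul x z) y)
    (htnp2 : ∀ x y z : A, (2:k) • mul z (cir x y) = cir (mul z x) y + cir x (mul z y))
    (u : A)
    (star : A → A → A)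
    (hstar : ∀ x y : A, star x y = mul u (cir x y) - cir (mul u x) y - cir x (mul u y)) :
    (∀ x y : A, star x y = - mul u (cir x y)) ∧
    (∀ x y z : A, star (star x y) z = star (star x z) y) ∧
    (∀ x y z : A, star (star x y) z - star x (star y z) = star (star y x) z - star y (star x z)) ∧
    (∀ x y z : A, star (mul x y) z = star (mul x z) y) ∧
    (∀ x y z : A, (2:k) • mul z (star x y) = star (mul z x) y + star x (mul z y)) := by
  have hstar' : ∀ x y : A, star x y = - mul u (cir x y) := by
    intro x y
    rw [hstar]
    linear_combination (norm := module) htnp2 x y u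
  have hmz : ∀ z w : A, mul z (mul u w) = mul u (mul z w) := by
    intro z w
    rw [← hassoc, hcomm z u, hassoc]
  have K2 : ∀ x y z : A, mul u (cir (mul u (cir x y)) z) = mul u (cir (mul u (cir x z)) y) := by
    intro x y z
    linear_combination (norm :=
        (simp only [map_add, map_sub, map_neg, map_smul, LinearMap.add_apply,
          LinearMap.sub_apply, LinearMap.neg_apply, LinearMap.smul_apply]; module))
      congrArg (fun t => mul u (cir t z)) (htnp2 x y u)
      - congrArg (fun t => mul u (cir t y)) (htnp2 x z u)
      + congrArg (fun t => mul u t) (htnp2 (cir x y) z u)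
      - congrArg (fun t => mul u t) (htnp2 (cir x z) y u)
      - (2:k) • congrArg (fun t => mul u (mul u t)) (hnov1 x y z)
      + congrArg (fun t => mul u t) (hnov1 x y (mul u z))
      + congrArg (fun t => mul u t) (hnov1 x (mul u y) z)
      + congrArg (fun t => mul u t) (hnov1 (mul u x) y z)
  have K3 : ∀ x y z : A, mul u (cir (mul u (cir x y)) z) - mul u (cir x (mul u (cir y z)))
      = mul u (cir (mul u (cir y x)) z) - mul u (cir y (mul u (cir x z))) := by
    intro x y z
    linear_combination (norm :=
        (simp only [map_add, map_sub, map_neg, map_smul, LinearMap.add_apply,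
          LinearMap.sub_apply, LinearMap.neg_apply, LinearMap.smul_apply]; module))
      congrArg (fun t => mul u (cir t z)) (htnp2 x y u)
      + congrArg (fun t => mul u (cir y t)) (htnp2 x z u)
      - congrArg (fun t => mul u t) (htnp2 x (cir y z) u)
      - congrArg (fun t => mul u (cir t z)) (htnp2 y x u)
      - congrArg (fun t => mul u (cir x t)) (htnp2 y z u)
      + congrArg (fun t => mul u t) (htnp2 y (cir x z) u)
      + congrArg (fun t => mul u t) (htnp2 (cir x y) z u)
      - congrArg (fun t => mul u t) (htnp2 (cir y x) z u)
      - (2:k) • congrArg (fun t => mul u (mul u t)) (hnov2 x y z)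
      + congrArg (fun t => mul u t) (hnov2 x y (mul u z))
      + congrArg (fun t => mul u t) (hnov2 x (mul u y) z)
      + congrArg (fun t => mul u t) (hnov2 (mul u x) y z)
  refine ⟨hstar', ?_, ?_, ?_, ?_⟩
  · intro x y z
    simp only [hstar', map_neg, LinearMap.neg_apply, neg_neg]
    exact K2 x y z
  · intro x y z
    simp only [hstar', map_neg, LinearMap.neg_apply, neg_neg]
    simpa using K3 x y z
  · intro x y z
    rw [hstar' (mul x y) z, hstar' (mul x z) y, htnp1 x y z]
  · intro x y z
    simp only [hstar']
    linear_combination (norm :=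
        (simp only [map_add, map_sub, map_neg, map_smul, LinearMap.add_apply,
          LinearMap.sub_apply, LinearMap.neg_apply, LinearMap.smul_apply]; module))
      (-2:k) • hmz z (cir x y) - congrArg (fun t => mul u t) (htnp2 x y z)
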